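/- Let g = sl(n+1,ℂ) act on F_μ = {f ∈ t^μ ℂ[t₀^{±1},...,t_n^{±1}] : Ef = |μ|f} via E_{ij} ↦ t_i ∂/∂t_j, where E = Σ t_i ∂/∂t_i and |μ| = μ₀+...+μ_n. Suppose an h-equivariant map c : g → End(F_μ) is defined by c(E_{ii} − E_{jj}) = 0 and c(E_{ij}) = b_{ij}·(t_i/t_j) (multiplication operator) for i ≠ j, with constants b_{ij} ∈ ℂ. Then c is a 1-cocycle (i.e. satisfies c([g₁,g₂]) = [g₁,c(g₂)] − [g₂,c(g₁)]) if and only if all b_{ij} are equal to a single constant b. -/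

import Mathlib

/-! The cuspidal `gl(n+1)`-module `F_μ = {f ∈ t^μ ℂ[t₀^{±1},…,t_n^{±1}] : Ef = |μ|f}`,
realized on `ExpLat m →₀ ℂ` (coefficients with respect to the monomial basis
`t^{μ+d}`, `d` in the root lattice `{d : Fin m → ℤ | ∑ d = 0}`), with `E_{ij} ↦ t_i ∂/∂t_j`. -/

/-- Exponent shifts: `{d : Fin m → ℤ // ∑ i, d i = 0}`. -/
def ExpLat (m : ℕ) : Type := {d : Fin m → ℤ // ∑ i, d i = 0}

/-- The indicator `δᵢ`. -/
def delta (m : ℕ) (i : Fin m) : Fin m → ℤ := fun k => if k = i then 1 else 0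

lemma sum_delta (m : ℕ) (i : Fin m) : ∑ k, delta m i k = 1 := by
  simp [delta]

/-- Addition of `δᵢ - δⱼ` as a bijection of the exponent lattice
(multiplication by `t_i/t_j` on monomials). -/
def shiftE (m : ℕ) (i j : Fin m) : ExpLat m ≃ ExpLat m where
  toFun d := ⟨fun k => d.1 k + delta m i k - delta m j k, by
    rw [Finset.sum_sub_distrib, Finset.sum_add_distrib, d.2, sum_delta, sum_delta]; ring⟩
  invFun d := ⟨fun k => d.1 k - delta m i k + delta m j k, by
    rw [Finset.sum_add_distrib, Finset.sum_sub_distrib, d.2, sum_delta, sum_delta]; ring⟩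
  left_inv d := by apply Subtype.ext; funext k; ring
  right_inv d := by apply Subtype.ext; funext k; ring

/-- The action of `E_{ij} = t_i ∂/∂t_j` on `F_μ`: on basis monomials,
`E_{ij} · t^{μ+d} = (μ_j + d_j) t^{μ+d+δᵢ-δⱼ}`. -/
noncomputable def Eop (m : ℕ) (μ : Fin m → ℂ) (i j : Fin m) :
    Module.End ℂ (ExpLat m →₀ ℂ) :=
  Finsupp.lsum ℂ fun d => LinearMap.toSpanSingleton ℂ _
    ((μ j + (d.1 j : ℂ)) • Finsupp.single (shiftE m i j d) (1 : ℂ))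

/-- Multiplication by `t_i/t_j` on `F_μ`. -/
noncomputable def Tmul (m : ℕ) (i j : Fin m) : Module.End ℂ (ExpLat m →₀ ℂ) :=
  Finsupp.lsum ℂ fun d => LinearMap.toSpanSingleton ℂ _
    (Finsupp.single (shiftE m i j d) (1 : ℂ))

/- ### Auxiliary lemmas -/

lemma shiftE_coe (m : ℕ) (i j : Fin m) (d : ExpLat m) (x : Fin m) :
    (shiftE m i j d).1 x = d.1 x + delta m i x - delta m j x := rfl

lemma shiftE_comm (m : ℕ) (i j k l : Fin m) (d : ExpLat m) :
    shiftE m i j (shiftE m k l d) = shiftE m k l (shiftE m i j d) := by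
  apply Subtype.ext; funext x; simp only [shiftE_coe]; ring

lemma shiftE_trans (m : ℕ) (i j l : Fin m) (d : ExpLat m) :
    shiftE m i j (shiftE m j l d) = shiftE m i l d := by
  apply Subtype.ext; funext x; simp only [shiftE_coe]; ring

lemma shiftE_self (m : ℕ) (i : Fin m) (d : ExpLat m) : shiftE m i i d = d := by
  apply Subtype.ext; funext x; simp only [shiftE_coe]; ring

lemma Tmul_single (m : ℕ) (i j : Fin m) (d : ExpLat m) (a : ℂ) :
    Tmul m i j (Finsupp.single d a) = Finsupp.single (shiftE m i j d) a := by
  rw [Tmul, Finsupp.lsum_single, LinearMap.toSpanSingleton_apply, Finsupp.smul_single,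
    smul_eq_mul, mul_one]

lemma Eop_single (m : ℕ) (μ : Fin m → ℂ) (i j : Fin m) (d : ExpLat m) (a : ℂ) :
    Eop m μ i j (Finsupp.single d a) =
      (μ j + (d.1 j : ℂ)) • Finsupp.single (shiftE m i j d) a := by
  rw [Eop, Finsupp.lsum_single, LinearMap.toSpanSingleton_apply, smul_comm,
    Finsupp.smul_single, smul_eq_mul, mul_one]

lemma Tmul_comm (m : ℕ) (i j k l : Fin m) :
    Tmul m i j * Tmul m k l = Tmul m k l * Tmul m i j := by
  apply Finsupp.lhom_ext (fun d a => ?_)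
  simp only [Module.End.mul_apply, Tmul_single, shiftE_comm]

lemma Tmul_mul (m : ℕ) (i j l : Fin m) :
    Tmul m i j * Tmul m j l = Tmul m i l := by
  apply Finsupp.lhom_ext (fun d a => ?_)
  simp only [Module.End.mul_apply, Tmul_single, shiftE_trans]

lemma Tmul_self (m : ℕ) (i : Fin m) : Tmul m i i = 1 := by
  apply Finsupp.lhom_ext (fun d a => ?_)
  simp only [Tmul_single, shiftE_self, Module.End.one_apply]

section
attribute [local instance 100] LieRing.ofAssociativeRing

/- Specialized scalar-multiplication lemmas on `Module.End ℂ (ExpLat m →₀ ℂ)`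
(so that `rw` matches the instances as elaborated in the statements below). -/

lemma lie_smulE (m : ℕ) (r : ℂ) (f g : Module.End ℂ (ExpLat m →₀ ℂ)) :
    ⁅f, r • g⁆ = r • ⁅f, g⁆ := lie_smul r f g

lemma smul_smulE (m : ℕ) (x y : ℂ) (f : Module.End ℂ (ExpLat m →₀ ℂ)) :
    x • y • f = (x * y) • f := smul_smul x y f

lemma sub_smulE (m : ℕ) (x y : ℂ) (f : Module.End ℂ (ExpLat m →₀ ℂ)) :
    (x - y) • f = x • f - y • f := sub_smul x y f

lemma one_smulE (m : ℕ) (f : Module.End ℂ (ExpLat m →₀ ℂ)) : (1 : ℂ) • f = f :=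
  one_smul ℂ f

lemma zero_smulE (m : ℕ) (f : Module.End ℂ (ExpLat m →₀ ℂ)) : (0 : ℂ) • f = 0 :=
  zero_smul ℂ f

lemma neg_smulE (m : ℕ) (x : ℂ) (f : Module.End ℂ (ExpLat m →₀ ℂ)) :
    (-x) • f = -(x • f) := neg_smul x f

lemma smul_zeroE (m : ℕ) (x : ℂ) : x • (0 : Module.End ℂ (ExpLat m →₀ ℂ)) = 0 :=
  smul_zero x

lemma sub_eq_zeroE (m : ℕ) (f g : Module.End ℂ (ExpLat m →₀ ℂ)) (h : f - g = 0) : f = g :=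
  sub_eq_zero.mp h

lemma smul_applyE (m : ℕ) (x : ℂ) (f : Module.End ℂ (ExpLat m →₀ ℂ)) (v : ExpLat m →₀ ℂ) :
    (x • f) v = x • f v := rfl

end

lemma lie_Eop_Tmul (m : ℕ) (μ : Fin m → ℂ) (i j k l : Fin m) :
    ⁅Eop m μ i j, Tmul m k l⁆ =
      (((if j = k then 1 else 0) : ℂ) - if j = l then 1 else 0) •
        (Tmul m i j * Tmul m k l) := by
  rw [LieRing.of_associative_ring_bracket]
  apply Finsupp.lhom_ext (fun d a => ?_)
  simp only [LinearMap.sub_apply, Module.End.mul_apply, LinearMap.smul_apply, map_smul,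
    Tmul_single, Eop_single, shiftE_comm m i j k l d, shiftE_coe]
  rw [← sub_smul]
  congr 1
  have : ((d.1 j + delta m k j - delta m l j : ℤ) : ℂ)
      = (d.1 j : ℂ) + (if j = k then 1 else 0) - (if j = l then 1 else 0) := by
    push_cast [delta]
    ring
  rw [this]
  ring

section
attribute [local instance 100] LieRing.ofAssociativeRing

lemma pair_eq {α : Type*} (b : α → α → ℂ)
    (sym : ∀ i j : α, i ≠ j → b i j = b j i)
    (T : ∀ i j k : α, i ≠ j → j ≠ k → i ≠ k → b i k = b j k) :
    ∀ i j k l : α, i ≠ j → k ≠ l → b i j = b k l := by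
  have T' : ∀ i j k : α, i ≠ k → j ≠ k → b i k = b j k := by
    intro i j k hik hjk
    rcases eq_or_ne i j with rfl | hij
    · rfl
    · exact T i j k hij hjk hik
  have S : ∀ i j k : α, i ≠ j → i ≠ k → b i j = b i k := by
    intro i j k hij hik
    rcases eq_or_ne j k with rfl | hjk
    · rfl
    · calc b i j = b j i := sym i j hij
        _ = b k i := T' j k i hij.symm hik.symm
        _ = b i k := (sym i k hik).symm
  intro i j k l hij hkl
  rcases eq_or_ne j k with rfl | hjk
  · calc b i j = b j i := sym i j hij
      _ = b j l := S j i l hij.symm hkl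
  · calc b i j = b k j := T' i k j hij hjk.symm
      _ = b k l := S k j l hjk.symm hkl

lemma bilinear_cocycle_ext {m : ℕ} {V : Type*} [AddCommGroup V] [Module ℂ V]
    (ρ c : Matrix (Fin m) (Fin m) ℂ →ₗ[ℂ] Module.End ℂ V)
    (h : ∀ i j k l : Fin m, c ⁅Matrix.single i j (1:ℂ), Matrix.single k l (1:ℂ)⁆
        = ⁅ρ (Matrix.single i j 1), c (Matrix.single k l 1)⁆
          - ⁅ρ (Matrix.single k l 1), c (Matrix.single i j 1)⁆) :
    ∀ A B : Matrix (Fin m) (Fin m) ℂ, c ⁅A, B⁆ = ⁅ρ A, c B⁆ - ⁅ρ B, c A⁆ := by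
  let F : Matrix (Fin m) (Fin m) ℂ →ₗ[ℂ] Matrix (Fin m) (Fin m) ℂ →ₗ[ℂ] Module.End ℂ V :=
    LinearMap.mk₂ ℂ (fun A B => c ⁅A, B⁆ - ⁅ρ A, c B⁆ + ⁅ρ B, c A⁆)
      (fun A A' B => by simp only [add_lie, lie_add, map_add]; abel)
      (fun r A B => by simp only [smul_lie, lie_smul, map_smul, smul_sub, smul_add])
      (fun A B B' => by simp only [add_lie, lie_add, map_add]; abel)
      (fun r A B => by simp only [smul_lie, lie_smul, map_smul, smul_sub, smul_add])
  have hF0 : F = 0 := by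
    apply (Matrix.stdBasis ℂ (Fin m) (Fin m)).ext
    rintro ⟨i, j⟩
    apply (Matrix.stdBasis ℂ (Fin m) (Fin m)).ext
    rintro ⟨k, l⟩
    simp only [Matrix.stdBasis_eq_single, LinearMap.zero_apply, F, LinearMap.mk₂_apply]
    rw [h i j k l]
    abel
  intro A B
  have hh := LinearMap.congr_fun (LinearMap.congr_fun hF0 A) B
  simp only [F, LinearMap.mk₂_apply, LinearMap.zero_apply] at hh
  rw [sub_add_eq_add_sub, sub_eq_zero] at hh
  exact eq_sub_of_add_eq hh

end

/-- Let `g = sl(n+1,ℂ)` act on the cuspidal module `F_μ` via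
`E_{ij} ↦ t_i ∂/∂t_j`.  The `h`-equivariant map `c` defined by `c(E_{ii} − E_{jj}) = 0` and
`c(E_{ij}) = b_{ij}·(t_i/t_j)` for `i ≠ j` is a 1-cocycle — i.e.
`c([A,B]) = [ρ(A), c(B)] − [ρ(B), c(A)]` for all `A, B ∈ sl(n+1)` — if and only if all the
constants `b_{ij}` are equal. -/
theorem cocycle_iff_constants_equal
    (n : ℕ) (hn : 1 ≤ n) (μ : Fin (n + 1) → ℂ)
    (hμ : ∀ i, ∀ z : ℤ, μ i ≠ z)
    (b : Fin (n + 1) → Fin (n + 1) → ℂ)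
    (ρ c : Matrix (Fin (n + 1)) (Fin (n + 1)) ℂ →ₗ[ℂ] Module.End ℂ (ExpLat (n + 1) →₀ ℂ))
    (hρ : ∀ i j, ρ (Matrix.single i j 1) = Eop (n + 1) μ i j)
    (hcdiag : ∀ i, c (Matrix.single i i 1) = 0)
    (hcoff : ∀ i j, i ≠ j → c (Matrix.single i j 1) = b i j • Tmul (n + 1) i j) :
    (∀ A B : Matrix (Fin (n + 1)) (Fin (n + 1)) ℂ, A.trace = 0 → B.trace = 0 →
        c ⁅A, B⁆ = ⁅ρ A, c B⁆ - ⁅ρ B, c A⁆) ↔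
      ∃ β : ℂ, ∀ i j, i ≠ j → b i j = β := by
  constructor
  · intro H
    have Tinj : ∀ (i j : Fin (n + 1)) (x y : ℂ),
        x • Tmul (n + 1) i j = y • Tmul (n + 1) i j → x = y := by
      intro i j x y h
      set z : ExpLat (n + 1) := ⟨fun _ => 0, by simp⟩ with hz
      have h2 : (x • Tmul (n + 1) i j) (Finsupp.single z 1) (shiftE (n + 1) i j z)
          = (y • Tmul (n + 1) i j) (Finsupp.single z 1) (shiftE (n + 1) i j z) := by rw [h]
      simpa [smul_applyE, Tmul_single, Finsupp.single_eq_same] using h2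
    have sym : ∀ i j : Fin (n + 1), i ≠ j → b i j = b j i := by
      intro i j hij
      have h := H (Matrix.single i j 1) (Matrix.single j i 1)
        (Matrix.trace_single_eq_of_ne i j 1 hij)
        (Matrix.trace_single_eq_of_ne j i 1 hij.symm)
      rw [LieRing.of_associative_ring_bracket, Matrix.single_mul_single_same,
        Matrix.single_mul_single_same, one_mul, map_sub, hcdiag i, hcdiag j,
        hρ, hρ, hcoff i j hij, hcoff j i hij.symm, lie_smulE, lie_smulE,
        lie_Eop_Tmul, lie_Eop_Tmul, Tmul_mul, Tmul_mul, Tmul_self, Tmul_self,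
        show ((if (j : Fin (n + 1)) = j then (1:ℂ) else 0) - if j = i then 1 else 0) = 1
          from by simp [hij.symm],
        show ((if (i : Fin (n + 1)) = i then (1:ℂ) else 0) - if i = j then 1 else 0) = 1
          from by simp [hij],
        one_smulE] at h
      have h4 : b j i • (1 : Module.End ℂ (ExpLat (n + 1) →₀ ℂ)) - b i j • 1 = 0 := by
        rw [← h]; exact sub_self 0
      have h5 := sub_eq_zeroE _ _ _ h4
      exact (Tinj i i _ _ (by rw [Tmul_self]; exact h5)).symm
    have trel : ∀ i j k : Fin (n + 1), i ≠ j → j ≠ k → i ≠ k → b i k = b j k := by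
      intro i j k hij hjk hik
      have h := H (Matrix.single i j 1) (Matrix.single j k 1)
        (Matrix.trace_single_eq_of_ne i j 1 hij)
        (Matrix.trace_single_eq_of_ne j k 1 hjk)
      rw [LieRing.of_associative_ring_bracket, Matrix.single_mul_single_same,
        Matrix.single_mul_single_of_ne (h := hik.symm), one_mul, sub_zero,
        hcoff i k hik, hρ, hρ, hcoff j k hjk, hcoff i j hij, lie_smulE, lie_smulE,
        lie_Eop_Tmul, lie_Eop_Tmul, Tmul_mul,
        show ((if (j : Fin (n + 1)) = j then (1:ℂ) else 0) - if j = k then 1 else 0) = 1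
          from by simp [hjk],
        show ((if (k : Fin (n + 1)) = i then (1:ℂ) else 0) - if k = j then 1 else 0) = 0
          from by simp [Ne.symm hik, Ne.symm hjk],
        one_smulE, zero_smulE, smul_zeroE] at h
      exact Tinj i k _ _ (by rw [h]; abel)
    have h0 : (0 : ℕ) < n + 1 := by omega
    have h1 : (1 : ℕ) < n + 1 := by omega
    refine ⟨b ⟨0, h0⟩ ⟨1, h1⟩, fun i j hij => ?_⟩
    exact pair_eq b sym trel i j ⟨0, h0⟩ ⟨1, h1⟩ hij (by simp [Fin.ext_iff])
  · rintro ⟨β, hβ⟩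
    have cval : ∀ p q : Fin (n + 1), c (Matrix.single p q 1)
        = (if p = q then 0 else β) • Tmul (n + 1) p q := by
      intro p q
      rcases eq_or_ne p q with rfl | hpq
      · rw [hcdiag p, if_pos rfl, zero_smulE]
      · rw [hcoff p q hpq, hβ p q hpq, if_neg hpq]
    intro A B _ _
    refine bilinear_cocycle_ext ρ c (fun i j k l => ?_) A B
    have e1 : ⁅ρ (Matrix.single i j 1), c (Matrix.single k l 1)⁆
        = (β * ((if j = k then 1 else 0) - if j = l then 1 else 0)) •
            (Tmul (n + 1) i j * Tmul (n + 1) k l) := by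
      rw [hρ, cval, lie_smulE, lie_Eop_Tmul, smul_smulE,
        show ((if (k : Fin (n + 1)) = l then (0:ℂ) else β) *
            ((if j = k then 1 else 0) - if j = l then 1 else 0))
          = (β * ((if j = k then 1 else 0) - if j = l then 1 else 0)) from ?_]
      rcases eq_or_ne k l with rfl | hkl
      · simp
      · rw [if_neg hkl]
    have e2 : ⁅ρ (Matrix.single k l 1), c (Matrix.single i j 1)⁆
        = (β * ((if l = i then 1 else 0) - if l = j then 1 else 0)) •
            (Tmul (n + 1) i j * Tmul (n + 1) k l) := by
      rw [hρ, cval, lie_smulE, lie_Eop_Tmul, smul_smulE, Tmul_comm (n + 1) k l i j,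
        show ((if (i : Fin (n + 1)) = j then (0:ℂ) else β) *
            ((if l = i then 1 else 0) - if l = j then 1 else 0))
          = (β * ((if l = i then 1 else 0) - if l = j then 1 else 0)) from ?_]
      rcases eq_or_ne i j with rfl | hij
      · simp
      · rw [if_neg hij]
    have e3 : c ⁅Matrix.single i j (1:ℂ), Matrix.single k l (1:ℂ)⁆
        = (β * ((if j = k then 1 else 0) - if l = i then 1 else 0)) •
            (Tmul (n + 1) i j * Tmul (n + 1) k l) := by
      rw [LieRing.of_associative_ring_bracket]
      rcases eq_or_ne j k with h1 | h1
      · subst h1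
        rcases eq_or_ne l i with h2 | h2
        · subst h2
          rw [Matrix.single_mul_single_same, Matrix.single_mul_single_same, one_mul,
            map_sub, hcdiag, hcdiag, sub_self,
            show (β * ((if (j : Fin (n + 1)) = j then (1:ℂ) else 0) -
              if (l : Fin (n + 1)) = l then 1 else 0)) = 0 from by simp, zero_smulE]
        · rw [Matrix.single_mul_single_same, one_mul,
            Matrix.single_mul_single_of_ne (h := h2), sub_zero, cval,
            if_neg (fun hh => h2 hh.symm), Tmul_mul,
            show (β * ((if (j : Fin (n + 1)) = j then (1:ℂ) else 0) -
              if l = i then 1 else 0)) = β from by simp [h2]]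
      · rcases eq_or_ne l i with h2 | h2
        · subst h2
          rw [Matrix.single_mul_single_of_ne (h := h1), Matrix.single_mul_single_same,
            one_mul, zero_sub, map_neg, cval, if_neg (fun hh => h1 hh.symm),
            Tmul_comm (n + 1) l j k l, Tmul_mul,
            show (β * ((if (j : Fin (n + 1)) = k then (1:ℂ) else 0) -
              if (l : Fin (n + 1)) = l then 1 else 0)) = -β
              from by rw [if_neg h1, if_pos rfl]; ring,
            neg_smulE]
        · rw [Matrix.single_mul_single_of_ne (h := h1),
            Matrix.single_mul_single_of_ne (h := h2), sub_self, map_zero,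
            show (β * ((if (j : Fin (n + 1)) = k then (1:ℂ) else 0) -
              if l = i then 1 else 0)) = 0 from by rw [if_neg h1, if_neg h2]; ring,
            zero_smulE]
    rw [e3, e1, e2, ← sub_smulE,
      show ((β * ((if (j : Fin (n + 1)) = k then (1:ℂ) else 0) - if j = l then 1 else 0)) -
          (β * ((if l = i then 1 else 0) - if l = j then 1 else 0)))
        = (β * ((if j = k then 1 else 0) - if l = i then 1 else 0)) from ?_]
    have hswap : (if (l : Fin (n + 1)) = j then (1:ℂ) else 0) = (if j = l then 1 else 0) := by
      rcases eq_or_ne l j with rfl | h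
      · simp
      · rw [if_neg h, if_neg (fun hh => h hh.symm)]
    rw [hswap]
    ring
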